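/- The number of equivalence classes of labelings of the cycle graph on n+1 vertices under Reeder's moves is k+2 if n = 2k and k+4 if n = 2k+1. -/

import Mathlib

/-- Reeder's move `T_i`. -/
def move {V : Type} [Fintype V] [DecidableEq V] (D : SimpleGraph V) [DecidableRel D.Adj]
    (i : V) (a : V → ZMod 2) : V → ZMod 2 :=
  fun j => if j = i then a i + ∑ k ∈ D.neighborFinset i, a k else a j

/-- One step of Reeder's game: apply some move. -/
def reederStep {V : Type} [Fintype V] [DecidableEq V] (D : SimpleGraph V)
    [DecidableRel D.Adj] (a b : V → ZMod 2) : Prop :=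
  ∃ i, b = move D i a

/-- The cycle graph on `n+1` vertices `0,…,n`. -/
def cycG (n : ℕ) : SimpleGraph (Fin (n + 1)) where
  Adj i j := i ≠ j ∧ ((i.val + 1) % (n + 1) = j.val ∨ (j.val + 1) % (n + 1) = i.val)
  symm := by constructor; intro i j h; exact ⟨Ne.symm h.1, h.2.symm⟩
  loopless := by constructor; intro i h; exact h.1 rfl

instance (n : ℕ) : DecidableRel (cycG n).Adj :=
  fun i j => inferInstanceAs
    (Decidable (i ≠ j ∧ ((i.val + 1) % (n + 1) = j.val ∨ (j.val + 1) % (n + 1) = i.val)))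

namespace CycAux

variable {n : ℕ}

/-- The difference vector of a labeling. -/
def db (a : Fin (n+1) → ZMod 2) (i : Fin (n+1)) : ZMod 2 := a i + a (i+1)

/-- The weight: number of positions where the difference vector is 1. -/
def wt (a : Fin (n+1) → ZMod 2) : ℕ := (Finset.univ.filter fun i => db a i = 1).card

lemma val_one (hn : 2 ≤ n) : ((1 : Fin (n+1)) : ℕ) = 1 := by
  have h : (1 : ℕ) < n + 1 := by omega
  simp [Fin.val_one', Nat.mod_eq_of_lt h]

lemma add_one_val (hn : 2 ≤ n) (i : Fin (n+1)) :
    ((i + 1 : Fin (n+1)) : ℕ) = (i.val + 1) % (n+1) := by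
  rw [Fin.val_add, val_one hn]

lemma one_ne_zero' (hn : 2 ≤ n) : (1 : Fin (n+1)) ≠ 0 := by
  intro h
  have := congrArg Fin.val h
  rw [val_one hn] at this
  simp at this

lemma adj_iff (hn : 2 ≤ n) (i j : Fin (n+1)) :
    (cycG n).Adj i j ↔ j = i + 1 ∨ j = i - 1 := by
  constructor
  · rintro ⟨hij, h | h⟩
    · left
      apply Fin.ext
      rw [add_one_val hn]
      exact h.symm
    · right
      rw [eq_sub_iff_add_eq]
      apply Fin.ext
      rw [add_one_val hn]
      exact h
  · rintro (rfl | rfl)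
    · refine ⟨fun h => one_ne_zero' hn (left_eq_add.mp h), Or.inl ?_⟩
      rw [add_one_val hn]
    · refine ⟨fun h => one_ne_zero' hn (sub_eq_self.mp h.symm), Or.inr ?_⟩
      rw [← add_one_val hn, sub_add_cancel]

lemma two_ne_zero' (hn : 2 ≤ n) : (1 : Fin (n+1)) + 1 ≠ 0 := by
  intro h0
  have := congrArg Fin.val h0
  rw [add_one_val hn, val_one hn, Nat.mod_eq_of_lt (by omega)] at this
  simp at this

lemma sum_nbr (hn : 2 ≤ n) (i : Fin (n+1)) (a : Fin (n+1) → ZMod 2) :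
    ∑ k ∈ (cycG n).neighborFinset i, a k = a (i + 1) + a (i - 1) := by
  have hne : i + 1 ≠ i - 1 := by
    intro h
    apply two_ne_zero' hn
    calc (1 : Fin (n+1)) + 1 = (i + 1) - (i - 1) := by abel
    _ = 0 := by rw [h]; simp
  have : (cycG n).neighborFinset i = {i + 1, i - 1} := by
    ext j
    rw [SimpleGraph.mem_neighborFinset, adj_iff hn]
    simp
  rw [this, Finset.sum_pair hne]

lemma move_eq (hn : 2 ≤ n) (i : Fin (n+1)) (a : Fin (n+1) → ZMod 2) :
    move (cycG n) i a = fun j => if j = i then a i + (a (i+1) + a (i-1)) else a j := by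
  funext j
  simp only [move, sum_nbr hn]

lemma db_move (hn : 2 ≤ n) (i : Fin (n+1)) (a : Fin (n+1) → ZMod 2) (j : Fin (n+1)) :
    db (move (cycG n) i a) j = db a (Equiv.swap (i-1) i j) := by
  have hii : i - 1 ≠ i := fun h => one_ne_zero' hn (sub_eq_self.mp h)
  have hsub : (i - 1) + 1 = i := sub_add_cancel i 1
  have hi1 : i + 1 ≠ i := fun h => one_ne_zero' hn (left_eq_add.mp h.symm)
  rcases eq_or_ne j i with rfl | hji
  · rw [Equiv.swap_apply_right]
    simp only [db, move_eq hn, if_pos rfl, if_neg hi1, hsub]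
    have : ∀ x y z : ZMod 2, x + (y + z) + y = z + x := by decide
    exact this _ _ _
  · rcases eq_or_ne j (i - 1) with rfl | hji'
    · rw [Equiv.swap_apply_left]
      simp only [db, move_eq hn, if_neg hii, hsub, if_pos rfl]
      have : ∀ x y z : ZMod 2, x + (y + (z + x)) = y + z := by decide
      exact this _ _ _
    · rw [Equiv.swap_apply_of_ne_of_ne hji' hji]
      have hj1 : j + 1 ≠ i := by
        intro h
        exact hji' (eq_sub_iff_add_eq.mpr h)
      simp only [db, move_eq hn, if_neg hji, if_neg hj1]

lemma wt_move (hn : 2 ≤ n) (i : Fin (n+1)) (a : Fin (n+1) → ZMod 2) :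
    wt (move (cycG n) i a) = wt a := by
  unfold wt
  simp only [db_move hn i a]
  apply Finset.card_bij (fun j _ => Equiv.swap (i-1) i j)
  · intro j hj
    simp only [Finset.mem_filter, Finset.mem_univ, true_and] at hj ⊢
    exact hj
  · intro j1 h1 j2 h2 h
    exact (Equiv.swap _ _).injective h
  · intro j hj
    simp only [Finset.mem_filter, Finset.mem_univ, true_and] at hj
    refine ⟨Equiv.swap (i-1) i j, ?_, ?_⟩
    · simp only [Finset.mem_filter, Finset.mem_univ, true_and, Equiv.swap_apply_self]
      exact hj
    · exact Equiv.swap_apply_self _ _ _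

lemma recover (hn : 2 ≤ n) (a b : Fin (n+1) → ZMod 2) (hb : db a = db b) (h0 : a 0 = b 0) :
    a = b := by
  funext j
  obtain ⟨t, ht⟩ := j
  induction t with
  | zero =>
    have : (⟨0, ht⟩ : Fin (n+1)) = 0 := rfl
    rw [this]; exact h0
  | succ t ih =>
    have ht' : t < n + 1 := by omega
    have e1 : (⟨t, ht'⟩ : Fin (n+1)) + 1 = ⟨t+1, ht⟩ := by
      apply Fin.ext
      rw [add_one_val hn]
      exact Nat.mod_eq_of_lt ht
    have h1 := congrFun hb ⟨t, ht'⟩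
    unfold db at h1
    rw [e1] at h1
    have h2 := ih ht'
    have key : ∀ x y u v : ZMod 2, x + y = u + v → x = u → y = v := by decide
    exact key _ _ _ _ h1 h2

lemma zmod2_cases (x : ZMod 2) : x = 0 ∨ x = 1 := by revert x; decide

lemma wt_eq_zero_iff (a : Fin (n+1) → ZMod 2) : wt a = 0 ↔ ∀ j, db a j = 0 := by
  unfold wt
  rw [Finset.card_eq_zero, Finset.filter_eq_empty_iff]
  constructor
  · intro h j
    rcases zmod2_cases (db a j) with h0 | h1
    · exact h0
    · exact absurd h1 (h (Finset.mem_univ j))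
  · intro h j _
    rw [h j]; decide

lemma wt_eq_top_iff (a : Fin (n+1) → ZMod 2) : wt a = n + 1 ↔ ∀ j, db a j = 1 := by
  unfold wt
  constructor
  · intro h j
    have : (Finset.univ.filter fun i => db a i = 1) = Finset.univ := by
      apply Finset.eq_univ_of_card
      rw [h, Fintype.card_fin]
    have := Finset.eq_univ_iff_forall.mp this j
    simpa using this
  · intro h
    have : (Finset.univ.filter fun i => db a i = 1) = Finset.univ :=
      Finset.eq_univ_iff_forall.mpr fun j => by simp [h j]
    rw [this, Finset.card_univ, Fintype.card_fin]

lemma wt_le (a : Fin (n+1) → ZMod 2) : wt a ≤ n + 1 := by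
  have := Finset.card_filter_le Finset.univ (fun i => db (n := n) a i = 1)
  rwa [Finset.card_univ, Fintype.card_fin] at this

lemma move_fix (hn : 2 ≤ n) (a : Fin (n+1) → ZMod 2) (hw : wt a = 0 ∨ wt a = n+1)
    (i : Fin (n+1)) : move (cycG n) i a = a := by
  have hsub : (i - 1) + 1 = i := sub_add_cancel i 1
  have hc : a (i+1) + a (i-1) = db a i + db a (i-1) := by
    unfold db
    rw [hsub]
    have : ∀ x y z : ZMod 2, y + z = (x + y) + (z + x) := by decide
    exact this _ _ _
  have hdd : db a i = db a (i - 1) := by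
    rcases hw with h | h
    · rw [(wt_eq_zero_iff a).mp h, (wt_eq_zero_iff a).mp h]
    · rw [(wt_eq_top_iff a).mp h, (wt_eq_top_iff a).mp h]
  funext j
  rw [move_eq hn]
  by_cases hj : j = i
  · subst hj
    simp only [if_pos rfl, hc, hdd]
    have : ∀ x y : ZMod 2, x + (y + y) = x := by decide
    exact this _ _
  · simp only [if_neg hj]

lemma wt_even (a : Fin (n+1) → ZMod 2) : 2 ∣ wt a := by
  have h1 : ((wt a : ℕ) : ZMod 2) = ∑ j, db a j := by
    rw [← Finset.sum_filter_add_sum_filter_not Finset.univ (fun j => db a j = 1) (db a)]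
    have e1 : ∑ j ∈ Finset.univ.filter (fun j => db a j = 1), db a j
        = ∑ _j ∈ Finset.univ.filter (fun j => db a j = 1), (1 : ZMod 2) :=
      Finset.sum_congr rfl (fun j hj => by simpa using (Finset.mem_filter.mp hj).2)
    have e2 : ∑ j ∈ Finset.univ.filter (fun j => ¬ db a j = 1), db a j = 0 :=
      Finset.sum_eq_zero (fun j hj => by
        rcases zmod2_cases (db a j) with h0 | h1
        · exact h0
        · exact absurd h1 (Finset.mem_filter.mp hj).2)
    rw [e1, e2, Finset.sum_const, add_zero, nsmul_eq_mul, mul_one]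
    rfl
  have h2 : ∑ j, db a j = 0 := by
    unfold db
    rw [Finset.sum_add_distrib]
    have : ∑ j : Fin (n+1), a (j + 1) = ∑ j : Fin (n+1), a j :=
      Fintype.sum_equiv (Equiv.addRight 1) _ _ (fun j => rfl)
    rw [this]
    have : ∀ x : ZMod 2, x + x = 0 := by decide
    exact this _
  rw [h2] at h1
  exact (ZMod.natCast_eq_zero_iff _ 2).mp h1

def meas (a : Fin (n+1) → ZMod 2) : ℕ := ∑ j : Fin (n+1), (db a j).val * j.val

lemma sorted_canonical (a : Fin (n+1) → ZMod 2)
    (hs : ∀ j l : Fin (n+1), j.val < l.val → db a l = 1 → db a j = 1) (j : Fin (n+1)) :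
    db a j = 1 ↔ (j : ℕ) < wt a := by
  constructor
  · intro h
    have hsub : Finset.Iic j ⊆ Finset.univ.filter fun i => db a i = 1 := by
      intro l hl
      simp only [Finset.mem_filter, Finset.mem_univ, true_and]
      rcases eq_or_lt_of_le (Finset.mem_Iic.mp hl) with rfl | hlt
      · exact h
      · exact hs l j hlt h
    have := Finset.card_le_card hsub
    rw [Fin.card_Iic] at this
    unfold wt
    omega
  · intro h
    by_contra hne
    have hsub : (Finset.univ.filter fun i => db a i = 1) ⊆ Finset.Iio j := by
      intro l hl
      simp only [Finset.mem_filter, Finset.mem_univ, true_and] at hl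
      rw [Finset.mem_Iio]
      rcases lt_trichotomy l j with h' | rfl | h'
      · exact h'
      · exact absurd hl hne
      · exact absurd (hs j l h' hl) hne
    have := Finset.card_le_card hsub
    rw [Fin.card_Iio] at this
    unfold wt at h
    omega

lemma exists_adjacent (a : Fin (n+1) → ZMod 2) :
    ∀ d (j l : Fin (n+1)), l.val = j.val + d + 1 → db a j ≠ 1 → db a l = 1 →
    ∃ t : ℕ, ∃ h : t + 1 < n + 1,
      db a ⟨t, by omega⟩ ≠ 1 ∧ db a ⟨t+1, h⟩ = 1 := by
  intro d
  induction d with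
  | zero =>
    intro j l hv hj hl
    refine ⟨j.val, by omega, ?_, ?_⟩
    · convert hj using 3
    · have hl' : l = ⟨j.val+1, by have := l.isLt; omega⟩ := Fin.ext (by simp only [Fin.val_mk]; omega)
      rw [hl'] at hl
      exact hl
  | succ d ih =>
    intro j l hv hj hl
    have hlt : j.val + 1 < n + 1 := by
      have := l.isLt; omega
    set j' : Fin (n+1) := ⟨j.val + 1, hlt⟩ with hj'
    by_cases hdb : db a j' = 1
    · exact ⟨j.val, hlt, by convert hj using 3, hdb⟩
    · exact ih j' l (by simp [hj']; omega) hdb hl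

lemma move_zero_of_ne (hn : 2 ≤ n) (a : Fin (n+1) → ZMod 2) (i : Fin (n+1)) (h : i ≠ 0) :
    move (cycG n) i a 0 = a 0 := by
  rw [move_eq hn]
  simp [Ne.symm h]

lemma sort (hn : 2 ≤ n) (a : Fin (n+1) → ZMod 2) :
    ∃ b, Relation.EqvGen (reederStep (cycG n)) a b ∧ b 0 = a 0 ∧ wt b = wt a ∧
      ∀ j : Fin (n+1), db b j = 1 ↔ (j : ℕ) < wt b := by
  suffices H : ∀ M, ∀ a : Fin (n+1) → ZMod 2, meas a ≤ M →
      ∃ b, Relation.EqvGen (reederStep (cycG n)) a b ∧ b 0 = a 0 ∧ wt b = wt a ∧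
      ∀ j : Fin (n+1), db b j = 1 ↔ (j : ℕ) < wt b from H (meas a) a le_rfl
  intro M
  induction M using Nat.strong_induction_on with
  | _ M ihM =>
  intro a ha
  by_cases hs : ∀ j l : Fin (n+1), j.val < l.val → db a l = 1 → db a j = 1
  · exact ⟨a, Relation.EqvGen.refl a, rfl, rfl, sorted_canonical a hs⟩
  · push_neg at hs
    obtain ⟨j, l, hjl, hl1, hj0⟩ := hs
    obtain ⟨t, hlt, ht0, ht1⟩ := exists_adjacent a (l.val - j.val - 1) j l (by omega) hj0 hl1
    set i : Fin (n+1) := ⟨t+1, hlt⟩ with hi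
    have hine : i ≠ 0 := by
      intro h
      have := congrArg Fin.val h
      simp [hi] at this
    have him : i - 1 = ⟨t, by omega⟩ := by
      symm
      rw [eq_sub_iff_add_eq]
      apply Fin.ext
      rw [add_one_val hn]
      exact Nat.mod_eq_of_lt hlt
    set σ := Equiv.swap (i - 1) i with hσ
    set a' := move (cycG n) i a with ha'
    have hdb : ∀ j, db a' j = db a (σ j) := db_move hn i a
    have hmeas : meas a' < meas a := by
      have hre : meas a' = ∑ j : Fin (n+1), (db a (σ j)).val * j.val := by
        unfold meas
        exact Finset.sum_congr rfl fun j _ => by rw [hdb]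
      have hre2 : meas a' = ∑ j : Fin (n+1), (db a j).val * (σ j).val := by
        rw [hre, ← Equiv.sum_comp σ (fun j => (db a (σ j)).val * j.val)]
        exact Finset.sum_congr rfl fun j _ => by rw [Equiv.swap_apply_self]
      rw [hre2]
      unfold meas
      apply Finset.sum_lt_sum
      · intro k _
        rcases eq_or_ne k (i-1) with rfl | hk1
        · have hz : db a (i - 1) = 0 := by
            rw [him]
            rcases zmod2_cases (db a ⟨t, by omega⟩) with h | h
            · exact h
            · exact absurd h ht0
          rw [hz]
          simp
        · rcases eq_or_ne k i with rfl | hk2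
          · rw [hσ, Equiv.swap_apply_right, him]
            have hv : ((⟨t, by omega⟩ : Fin (n+1)) : ℕ) ≤ (i : ℕ) := by
              simp [hi]
            exact Nat.mul_le_mul_left _ hv
          · rw [hσ, Equiv.swap_apply_of_ne_of_ne hk1 hk2]
      · refine ⟨i, Finset.mem_univ i, ?_⟩
        rw [hσ, Equiv.swap_apply_right, him, ht1]
        have h1 : (1 : ZMod 2).val = 1 := rfl
        simp only [hi, h1]
        omega
    obtain ⟨b, hb1, hb2, hb3, hb4⟩ := ihM (meas a') (by omega) a' le_rfl
    refine ⟨b, ?_, ?_, ?_, hb4⟩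
    · exact Relation.EqvGen.trans _ _ _
        (Relation.EqvGen.rel _ _ ⟨i, rfl⟩) hb1
    · rw [hb2, ha', move_zero_of_ne hn a i hine]
    · rw [hb3, ha', wt_move hn]

lemma reach (hn : 2 ≤ n) (a : Fin (n+1) → ZMod 2) (h0 : 0 < wt a) (h1 : wt a < n+1)
    (c : ZMod 2) :
    ∃ b, Relation.EqvGen (reederStep (cycG n)) a b ∧ b 0 = c ∧
      ∀ j : Fin (n+1), db b j = 1 ↔ (j : ℕ) < wt a := by
  obtain ⟨a1, he1, h01, hw1, hc1⟩ := sort hn a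
  rcases eq_or_ne (a 0) c with rfl | hne
  · exact ⟨a1, he1, h01, fun j => by rw [hc1 j, hw1]⟩
  · -- flip using T_0
    have hm : ((0 : Fin (n+1)) - 1) + 1 = 0 := sub_add_cancel 0 1
    have hvm : ((0 : Fin (n+1)) - 1).val = n := by
      have : ((0 : Fin (n+1)) - 1) = ⟨n, by omega⟩ := by
        symm
        rw [eq_sub_iff_add_eq]
        apply Fin.ext
        rw [add_one_val hn]
        simp
      rw [this]
    have hdb0 : db a1 0 = 1 := (hc1 0).mpr (by simp [hw1]; omega)
    have hdbm : db a1 (0 - 1) = 0 := by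
      rcases zmod2_cases (db a1 (0-1)) with h | h
      · exact h
      · have := (hc1 (0-1)).mp h
        rw [hvm, hw1] at this
        omega
    set a2 := move (cycG n) 0 a1 with ha2
    have h02 : a2 0 = a1 0 + 1 := by
      rw [ha2, move_eq hn]
      simp only [if_pos rfl]
      have hcomp : a1 (0+1) + a1 (0-1) = db a1 0 + db a1 (0-1) := by
        unfold db
        rw [hm]
        have : ∀ x y z : ZMod 2, y + z = (x + y) + (z + x) := by decide
        exact this _ _ _
      rw [hcomp, hdb0, hdbm, add_zero]
      simp
    obtain ⟨a3, he3, h03, hw3, hc3⟩ := sort hn a2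
    refine ⟨a3, ?_, ?_, ?_⟩
    · exact Relation.EqvGen.trans _ _ _ he1 (Relation.EqvGen.trans _ _ _
        (Relation.EqvGen.rel _ _ ⟨0, rfl⟩) he3)
    · rw [h03, h02, h01]
      have : ∀ x y : ZMod 2, x ≠ y → x + 1 = y := by decide
      exact this _ _ hne
    · intro j
      rw [hc3 j, hw3, ha2, wt_move hn, hw1]

lemma connect (hn : 2 ≤ n) (a b : Fin (n+1) → ZMod 2) (hw : wt a = wt b)
    (h0 : 0 < wt a) (h1 : wt a < n+1) :
    Relation.EqvGen (reederStep (cycG n)) a b := by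
  obtain ⟨a', ha', ha0, hca⟩ := reach hn a h0 h1 (b 0)
  obtain ⟨b', hb', hb0, hcb⟩ := reach hn b (hw ▸ h0) (hw ▸ h1) (b 0)
  have heq : a' = b' := by
    apply recover hn
    · funext j
      have h1 := hca j
      have h2 := hcb j
      rw [← hw] at h2
      rcases zmod2_cases (db a' j) with ha | ha <;> rcases zmod2_cases (db b' j) with hbb | hbb
      · rw [ha, hbb]
      · exact absurd (h1.mpr (h2.mp hbb)) (by rw [ha]; decide)
      · exact absurd (h2.mpr (h1.mp ha)) (by rw [hbb]; decide)
      · rw [ha, hbb]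
    · rw [ha0, hb0]
  exact Relation.EqvGen.trans _ _ _ ha' (heq ▸ Relation.EqvGen.symm _ _ hb')

/-- The classifying invariant. -/
def phi (a : Fin (n+1) → ZMod 2) : ℕ :=
  if wt a = 0 ∨ wt a = n+1 then (if a 0 = 0 then wt a else wt a + 1) else wt a

lemma phi_step (hn : 2 ≤ n) : ∀ a b, reederStep (cycG n) a b → phi a = phi b := by
  rintro a b ⟨i, rfl⟩
  by_cases hfix : wt a = 0 ∨ wt a = n+1
  · rw [move_fix hn a hfix]
  · have hw := wt_move hn i a
    unfold phi
    rw [hw, if_neg hfix, if_neg hfix]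

lemma not_fix_bounds {a : Fin (n+1) → ZMod 2} (hfix : ¬ (wt a = 0 ∨ wt a = n+1)) :
    0 < wt a ∧ wt a < n + 1 := by
  push_neg at hfix
  exact ⟨Nat.pos_of_ne_zero hfix.1, lt_of_le_of_ne (wt_le a) hfix.2⟩

lemma phi_fix_ne (hn : 2 ≤ n) {a b : Fin (n+1) → ZMod 2}
    (ha : wt a = 0 ∨ wt a = n+1) (hb : ¬ (wt b = 0 ∨ wt b = n+1)) :
    phi a ≠ phi b := by
  obtain ⟨hb0, hb1⟩ := not_fix_bounds hb
  have hwb := wt_even b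
  unfold phi
  rw [if_pos ha, if_neg hb]
  rcases ha with h1 | h1 <;> split_ifs <;> omega

lemma phi_inj (hn : 2 ≤ n) (a b : Fin (n+1) → ZMod 2) (h : phi a = phi b) :
    Quot.mk (reederStep (cycG n)) a = Quot.mk (reederStep (cycG n)) b := by
  by_cases ha : wt a = 0 ∨ wt a = n+1 <;> by_cases hb : wt b = 0 ∨ wt b = n+1
  · unfold phi at h
    rw [if_pos ha, if_pos hb] at h
    have hw : wt a = wt b := by
      rcases ha with h1 | h1 <;> rcases hb with h2 | h2 <;> split_ifs at h <;> omega
    rw [hw] at h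
    have h0 : a 0 = b 0 := by
      split_ifs at h with u v v
      · rw [u, v]
      · omega
      · omega
      · rcases zmod2_cases (a 0) with x | x <;> rcases zmod2_cases (b 0) with y | y
        · rw [x, y]
        · exact absurd x u
        · exact absurd y v
        · rw [x, y]
    have hdbe : db a = db b := by
      funext j
      rcases ha with h1 | h1
      · rw [(wt_eq_zero_iff a).mp h1 j, (wt_eq_zero_iff b).mp (hw ▸ h1) j]
      · rw [(wt_eq_top_iff a).mp h1 j, (wt_eq_top_iff b).mp (hw ▸ h1) j]
    rw [recover hn a b hdbe h0]
  · exact absurd h (phi_fix_ne hn ha hb)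
  · exact absurd h.symm (phi_fix_ne hn hb ha)
  · obtain ⟨ha0, ha1⟩ := not_fix_bounds ha
    unfold phi at h
    rw [if_neg ha, if_neg hb] at h
    exact Quot.eqvGen_sound (connect hn a b h ha0 ha1)

lemma wt_const (c : ZMod 2) : wt (fun _ : Fin (n+1) => c) = 0 := by
  rw [wt_eq_zero_iff]
  intro j
  unfold db
  have : ∀ x : ZMod 2, x + x = 0 := by decide
  exact this c

/-- Canonical representative of weight `w`. -/
def rep (w : ℕ) : Fin (n+1) → ZMod 2 := fun j => ((min j.val w : ℕ) : ZMod 2)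

lemma db_rep (hn : 2 ≤ n) {w : ℕ} (hw2 : 2 ∣ w) (hwn : w ≤ n) (j : Fin (n+1)) :
    db (rep w) j = 1 ↔ (j : ℕ) < w := by
  unfold db rep
  rcases eq_or_ne j.val n with hj | hj
  · have hj1 : ((j + 1 : Fin (n+1)) : ℕ) = 0 := by rw [add_one_val hn, hj]; simp
    rw [hj1, hj, Nat.min_eq_right hwn]
    have h0 : ((min 0 w : ℕ) : ZMod 2) = 0 := by simp
    rw [h0, add_zero, (ZMod.natCast_eq_zero_iff w 2).mpr hw2]
    constructor
    · intro hc; exact absurd hc (by decide)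
    · intro hc; omega
  · have hlt : j.val + 1 < n + 1 := by have := j.isLt; omega
    have hj1 : ((j + 1 : Fin (n+1)) : ℕ) = j.val + 1 := by
      rw [add_one_val hn]; exact Nat.mod_eq_of_lt hlt
    rw [hj1]
    rcases lt_or_ge j.val w with hc | hc
    · have e1 : min j.val w = j.val := min_eq_left (by omega)
      have e2 : min (j.val+1) w = j.val + 1 := min_eq_left (by omega)
      rw [e1, e2]
      push_cast
      constructor
      · intro _; exact hc
      · intro _
        have : ∀ x : ZMod 2, x + (x + 1) = 1 := by decide
        exact this _
    · have e1 : min j.val w = w := min_eq_right hc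
      have e2 : min (j.val+1) w = w := min_eq_right (by omega)
      rw [e1, e2]
      constructor
      · intro hh
        have hxx : ∀ x : ZMod 2, x + x = 0 := by decide
        rw [hxx] at hh
        exact absurd hh.symm (by decide)
      · intro hh; omega

lemma wt_rep (hn : 2 ≤ n) {w : ℕ} (hw2 : 2 ∣ w) (hwn : w ≤ n) :
    wt (rep w : Fin (n+1) → ZMod 2) = w := by
  unfold wt
  have he : (Finset.univ.filter fun i : Fin (n+1) => db (rep w) i = 1)
      = Finset.Iio (⟨w, by omega⟩ : Fin (n+1)) := by
    ext j
    simp only [Finset.mem_filter, Finset.mem_univ, true_and, Finset.mem_Iio]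
    rw [db_rep hn hw2 hwn, Fin.lt_def]
  rw [he, Fin.card_Iio]

lemma rep_zero : (rep w : Fin (n+1) → ZMod 2) 0 = 0 := by
  unfold rep
  simp

/-- Alternating representative (shifted by `c`). -/
def altc (c : ZMod 2) : Fin (n+1) → ZMod 2 := fun j => (j.val : ZMod 2) + c

lemma wt_altc (hn : 2 ≤ n) (hpar : 2 ∣ (n+1)) (c : ZMod 2) :
    wt (altc c : Fin (n+1) → ZMod 2) = n + 1 := by
  rw [wt_eq_top_iff]
  intro j
  unfold db altc
  have hkey : ∀ c' x y : ZMod 2, (x + c') + (y + c') = x + y := by decide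
  rw [hkey c]
  rcases eq_or_ne j.val n with hj | hj
  · have hj1 : ((j + 1 : Fin (n+1)) : ℕ) = 0 := by rw [add_one_val hn, hj]; simp
    rw [hj1, hj]
    have hn1 : ((n + 1 : ℕ) : ZMod 2) = 0 := (ZMod.natCast_eq_zero_iff _ 2).mpr hpar
    push_cast at hn1 ⊢
    have : ∀ x : ZMod 2, x + 1 = 0 → x + 0 = 1 := by decide
    exact this _ hn1
  · have hlt : j.val + 1 < n + 1 := by have := j.isLt; omega
    have hj1 : ((j + 1 : Fin (n+1)) : ℕ) = j.val + 1 := by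
      rw [add_one_val hn]; exact Nat.mod_eq_of_lt hlt
    rw [hj1]
    push_cast
    have : ∀ x : ZMod 2, x + (x + 1) = 1 := by decide
    exact this _

lemma altc_zero (c : ZMod 2) : (altc c : Fin (n+1) → ZMod 2) 0 = c := by
  unfold altc
  simp

lemma phi_range (hn : 2 ≤ n) (v : ℕ) :
    (∃ a : Fin (n+1) → ZMod 2, phi a = v) ↔
      (v = 0 ∨ v = 1 ∨ (2 ∣ v ∧ 2 ≤ v ∧ v ≤ n) ∨ (2 ∣ (n+1) ∧ (v = n+1 ∨ v = n+2))) := by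
  constructor
  · rintro ⟨a, rfl⟩
    have hwa := wt_even a
    have hla := wt_le a
    unfold phi
    split_ifs with hfix h0
    · rcases hfix with h1 | h1
      · left; exact h1
      · right; right; right
        exact ⟨h1 ▸ hwa, Or.inl h1⟩
    · rcases hfix with h1 | h1
      · right; left; omega
      · right; right; right
        exact ⟨h1 ▸ hwa, Or.inr (by omega)⟩
    · obtain ⟨hb0, hb1⟩ := not_fix_bounds hfix
      right; right; left
      exact ⟨hwa, by omega, by omega⟩
  · intro h
    rcases h with rfl | rfl | ⟨hv2, hv0, hvn⟩ | ⟨hpar, rfl | rfl⟩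
    · refine ⟨fun _ => 0, ?_⟩
      unfold phi
      rw [if_pos (Or.inl (wt_const 0)), if_pos rfl, wt_const]
    · refine ⟨fun _ => 1, ?_⟩
      unfold phi
      rw [if_pos (Or.inl (wt_const 1)), if_neg (fun hh => one_ne_zero hh), wt_const]
    · refine ⟨rep v, ?_⟩
      unfold phi
      rw [wt_rep hn hv2 hvn, if_neg (by omega)]
    · refine ⟨altc 0, ?_⟩
      unfold phi
      rw [wt_altc hn hpar 0, if_pos (Or.inr rfl), if_pos (altc_zero 0)]
    · refine ⟨altc 1, ?_⟩
      unfold phi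
      rw [wt_altc hn hpar 1, if_pos (Or.inr rfl),
        if_neg (show ¬ (altc 1 : Fin (n+1) → ZMod 2) 0 = 0 by rw [altc_zero 1]; exact one_ne_zero)]

lemma card_eq (hn : 2 ≤ n) :
    Nat.card (Quot (reederStep (cycG n))) = (Set.range (phi (n := n))).ncard := by
  have hresp : ∀ a b, reederStep (cycG n) a b → phi a = phi b := phi_step hn
  set Φ : Quot (reederStep (cycG n)) → ℕ := Quot.lift phi hresp with hΦ
  have hinj : Function.Injective Φ := by
    intro q1 q2
    induction q1 using Quot.ind with | _ a =>
    induction q2 using Quot.ind with | _ b =>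
    intro h
    exact phi_inj hn a b h
  have hre : Set.range Φ = Set.range (phi (n := n)) := by
    ext v
    constructor
    · rintro ⟨q, rfl⟩
      induction q using Quot.ind with | _ a => exact ⟨a, rfl⟩
    · rintro ⟨a, rfl⟩
      exact ⟨Quot.mk _ a, rfl⟩
  rw [← hre, ← Nat.card_coe_set_eq]
  exact Nat.card_congr (Equiv.ofInjective Φ hinj)

end CycAux


open CycAux in
/-- The number of equivalence classes of labelings of the cycle graph on `n+1` vertices
under Reeder's moves is `k+2` if `n = 2k` and `k+4` if `n = 2k+1`. -/
theorem cycG_card_classes (n : ℕ) (hn : 2 ≤ n) :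
    (∀ k : ℕ, n = 2 * k → Nat.card (Quot (reederStep (cycG n))) = k + 2) ∧
    (∀ k : ℕ, n = 2 * k + 1 → Nat.card (Quot (reederStep (cycG n))) = k + 4) := by
  constructor
  · rintro k rfl
    rw [card_eq hn]
    have hrange : Set.range (phi (n := 2*k)) =
        ↑(insert 0 (insert 1 ((Finset.range k).image fun t => 2*t+2)) : Finset ℕ) := by
      ext v
      simp only [Set.mem_range, Finset.coe_insert, Set.mem_insert_iff, Finset.mem_coe,
        Finset.mem_image, Finset.mem_range]
      rw [phi_range hn v]
      constructor
      · rintro (rfl | rfl | ⟨h2, h0, hvn⟩ | ⟨hpar, hv⟩)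
        · left; rfl
        · right; left; rfl
        · right; right
          obtain ⟨c, rfl⟩ := h2
          exact ⟨c - 1, by omega, by omega⟩
        · exfalso; omega
      · rintro (rfl | rfl | ⟨t, ht, rfl⟩)
        · left; rfl
        · right; left; rfl
        · right; right; left
          exact ⟨⟨t+1, by ring⟩, by omega, by omega⟩
    rw [hrange, Set.ncard_coe_finset]
    have h1 : (1:ℕ) ∉ (Finset.range k).image fun t => 2*t+2 := by
      simp only [Finset.mem_image, Finset.mem_range]
      rintro ⟨t, _, h⟩
      omega
    have h0 : (0:ℕ) ∉ insert 1 ((Finset.range k).image fun t => 2*t+2) := by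
      simp only [Finset.mem_insert, Finset.mem_image, Finset.mem_range]
      rintro (h | ⟨t, _, h⟩) <;> omega
    rw [Finset.card_insert_of_notMem h0, Finset.card_insert_of_notMem h1,
        Finset.card_image_of_injective _
          (show Function.Injective fun t => 2*t+2 from fun x y hxy => by
            have h' : 2*x+2 = 2*y+2 := hxy
            omega),
        Finset.card_range]
  · rintro k rfl
    rw [card_eq hn]
    have hrange : Set.range (phi (n := 2*k+1)) =
        ↑(insert 0 (insert 1 (insert (2*k+2) (insert (2*k+3)
          ((Finset.range k).image fun t => 2*t+2)))) : Finset ℕ) := by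
      ext v
      simp only [Set.mem_range, Finset.coe_insert, Set.mem_insert_iff, Finset.mem_coe,
        Finset.mem_image, Finset.mem_range]
      rw [phi_range hn v]
      constructor
      · rintro (rfl | rfl | ⟨h2, h0, hvn⟩ | ⟨hpar, hv | hv⟩)
        · left; rfl
        · right; left; rfl
        · right; right; right; right
          obtain ⟨c, rfl⟩ := h2
          exact ⟨c - 1, by omega, by omega⟩
        · right; right; left; omega
        · right; right; right; left; omega
      · rintro (rfl | rfl | rfl | rfl | ⟨t, ht, rfl⟩)
        · left; rfl
        · right; left; rfl
        · right; right; right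
          exact ⟨⟨k+1, by ring⟩, Or.inl (by omega)⟩
        · right; right; right
          exact ⟨⟨k+1, by ring⟩, Or.inr (by omega)⟩
        · right; right; left
          exact ⟨⟨t+1, by ring⟩, by omega, by omega⟩
    rw [hrange, Set.ncard_coe_finset]
    have h3 : (2*k+3:ℕ) ∉ (Finset.range k).image fun t => 2*t+2 := by
      simp only [Finset.mem_image, Finset.mem_range]
      rintro ⟨t, _, h⟩
      omega
    have h2 : (2*k+2:ℕ) ∉ insert (2*k+3) ((Finset.range k).image fun t => 2*t+2) := by
      simp only [Finset.mem_insert, Finset.mem_image, Finset.mem_range]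
      rintro (h | ⟨t, _, h⟩) <;> omega
    have h1 : (1:ℕ) ∉ insert (2*k+2) (insert (2*k+3)
        ((Finset.range k).image fun t => 2*t+2)) := by
      simp only [Finset.mem_insert, Finset.mem_image, Finset.mem_range]
      rintro (h | h | ⟨t, _, h⟩) <;> omega
    have h0 : (0:ℕ) ∉ insert 1 (insert (2*k+2) (insert (2*k+3)
        ((Finset.range k).image fun t => 2*t+2))) := by
      simp only [Finset.mem_insert, Finset.mem_image, Finset.mem_range]
      rintro (h | h | h | ⟨t, _, h⟩) <;> omega
    rw [Finset.card_insert_of_notMem h0, Finset.card_insert_of_notMem h1,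
        Finset.card_insert_of_notMem h2, Finset.card_insert_of_notMem h3,
        Finset.card_image_of_injective _
          (show Function.Injective fun t => 2*t+2 from fun x y hxy => by
            have h' : 2*x+2 = 2*y+2 := hxy
            omega),
        Finset.card_range]
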